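/- The Bessel kernel satisfies the pointwise bound G_s(x) ≤ C(n) · (s/(n-s)) · |x|^{-n+s} for all x ∈ ℝ^n \ {0} and 0 < s < n, with C(n) depending only on n. -/

import Mathlib

open MeasureTheory Set Real
open scoped ENNReal

lemma bessel_aux {b a : ℝ} (hb : 0 < b) (ha : a < 0) :
    IntegrableOn (fun δ : ℝ => Real.exp (-b / δ) * δ ^ (a - 1)) (Ioi 0) ∧
    ∫ δ in Ioi (0 : ℝ), Real.exp (-b / δ) * δ ^ (a - 1) = b ^ a * Real.Gamma (-a) := by
  set g : ℝ → ℝ := fun y => y ^ (-a - 1) * Real.exp (-(b * y)) with hg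
  have hgint : IntegrableOn g (Ioi 0) := by
    have := integrableOn_rpow_mul_exp_neg_mul_rpow (p := 1) (s := -a - 1) (b := b)
      (by linarith) one_pos hb
    simpa [Real.rpow_one] using this
  have hcongr : EqOn (fun x : ℝ => (|(-1 : ℝ)| * x ^ ((-1 : ℝ) - 1)) • g (x ^ (-1 : ℝ)))
      (fun δ : ℝ => Real.exp (-b / δ) * δ ^ (a - 1)) (Ioi 0) := by
    intro x hx
    have hx0 : (0 : ℝ) < x := hx
    simp only [smul_eq_mul, abs_neg, abs_one, one_mul, hg, Real.rpow_neg_one x]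
    rw [Real.inv_rpow hx0.le, ← Real.rpow_neg hx0.le, show -(-a - 1) = a + 1 by ring]
    rw [show -b / x = -(b * x⁻¹) by rw [neg_div, div_eq_mul_inv]]
    rw [show ((-1 : ℝ) - 1) = (-2 : ℝ) by norm_num]
    rw [← mul_assoc, mul_comm (x ^ (-2 : ℝ)) (x ^ (a + 1)), ← Real.rpow_add hx0]
    rw [show a + 1 + -2 = a - 1 by ring, mul_comm]
  constructor
  · exact ((integrableOn_Ioi_comp_rpow_iff g (p := -1) (by norm_num)).mpr hgint).congr_fun
      hcongr measurableSet_Ioi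
  · rw [← setIntegral_congr_fun measurableSet_Ioi hcongr,
      integral_comp_rpow_Ioi g (by norm_num : (-1 : ℝ) ≠ 0)]
    have := Real.integral_rpow_mul_exp_neg_mul_Ioi (a := -a) (by linarith) hb
    rw [hg]
    simp only at this ⊢
    rw [this, one_div, Real.inv_rpow hb.le, ← Real.rpow_neg hb.le, neg_neg]

/-- The Bessel potential kernel `G_s` on `ℝ^n`. -/
noncomputable def besselKernel (n : ℕ) (s : ℝ) (x : EuclideanSpace ℝ (Fin n)) : ℝ :=
  (4 * π) ^ (-(s / 2)) / Real.Gamma (s / 2) *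
    ∫ δ in Ioi (0 : ℝ),
      Real.exp (-(π * ‖x‖ ^ 2) / δ) * Real.exp (-δ / (4 * π)) * δ ^ ((-(n : ℝ) + s) / 2) / δ

theorem statement7 (n : ℕ) (hn : 0 < n) :
    ∃ C : ℝ, 0 < C ∧ ∀ s : ℝ, 0 < s → s < n →
      ∀ x : EuclideanSpace ℝ (Fin n), x ≠ 0 →
        besselKernel n s x ≤ C * (s / (n - s)) * ‖x‖ ^ (-(n : ℝ) + s) := by
  have hKne : (Icc (1 : ℝ) (1 + n / 2)).Nonempty := ⟨1, le_rfl, le_add_of_nonneg_right (by positivity)⟩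
  have hcont : ContinuousOn Real.Gamma (Icc (1 : ℝ) (1 + n / 2)) := fun y hy =>
    (Real.differentiableAt_Gamma fun m =>
      (lt_of_le_of_lt (neg_nonpos.mpr m.cast_nonneg)
        (lt_of_lt_of_le one_pos hy.1)).ne').continuousAt.continuousWithinAt
  obtain ⟨cmin, hcmin, hminOn⟩ := isCompact_Icc.exists_isMinOn hKne hcont
  obtain ⟨cmax, hcmax, hmaxOn⟩ := isCompact_Icc.exists_isMaxOn hKne hcont
  have hmin := isMinOn_iff.mp hminOn
  have hmax := isMaxOn_iff.mp hmaxOn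
  set m : ℝ := Real.Gamma cmin with hmdef
  set M : ℝ := Real.Gamma cmax with hMdef
  have hm : 0 < m := Real.Gamma_pos_of_pos (lt_of_lt_of_le one_pos hcmin.1)
  have hM : 0 < M := Real.Gamma_pos_of_pos (lt_of_lt_of_le one_pos hcmax.1)
  refine ⟨M / m, div_pos hM hm, fun s hs hsn x hx => ?_⟩
  have hx0 : 0 < ‖x‖ := norm_pos_iff.mpr hx
  have hna : (0 : ℝ) < n := by exact_mod_cast hn
  have hns : (0 : ℝ) < (n : ℝ) - s := by linarith
  set b : ℝ := π * ‖x‖ ^ 2 with hbdef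
  have hb : 0 < b := by rw [hbdef]; positivity
  set a : ℝ := (-(n : ℝ) + s) / 2 with hadef
  have ha : a < 0 := by rw [hadef]; linarith
  have hapos : 0 < -a := by linarith
  obtain ⟨hint, hval⟩ := bessel_aux hb ha
  have hΓnegapos : 0 < Real.Gamma (-a) := Real.Gamma_pos_of_pos hapos
  -- the integral bound
  have hmono : ∫ δ in Ioi (0 : ℝ),
      Real.exp (-b / δ) * Real.exp (-δ / (4 * π)) * δ ^ a / δ ≤ b ^ a * Real.Gamma (-a) := by
    rw [← hval]
    refine integral_mono_of_nonneg ?_ hint ?_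
    · refine (ae_restrict_iff' measurableSet_Ioi).mpr (ae_of_all _ fun δ hδ => ?_)
      have hδ0 : (0 : ℝ) < δ := hδ
      positivity
    · refine (ae_restrict_iff' measurableSet_Ioi).mpr (ae_of_all _ fun δ hδ => ?_)
      have hδ0 : (0 : ℝ) < δ := hδ
      have h1 : Real.exp (-δ / (4 * π)) ≤ 1 := by
        rw [Real.exp_le_one_iff, neg_div]
        exact neg_nonpos.mpr (div_nonneg hδ0.le (by positivity))
      calc Real.exp (-b / δ) * Real.exp (-δ / (4 * π)) * δ ^ a / δ
          ≤ Real.exp (-b / δ) * 1 * δ ^ a / δ := by gcongr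
        _ = Real.exp (-b / δ) * δ ^ (a - 1) := by
            rw [mul_one, Real.rpow_sub hδ0, Real.rpow_one]; ring
  -- coefficient bound
  have hcoeff : (4 * π) ^ (-(s / 2)) / Real.Gamma (s / 2) ≤ s / 2 / m := by
    have hs2 : (0 : ℝ) < s / 2 := by linarith
    have h1 : Real.Gamma (s / 2 + 1) = s / 2 * Real.Gamma (s / 2) :=
      Real.Gamma_add_one hs2.ne'
    have h2 : m ≤ Real.Gamma (s / 2 + 1) :=
      hmin _ ⟨by linarith, by linarith⟩
    have h3 : (4 * π) ^ (-(s / 2)) ≤ 1 :=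
      Real.rpow_le_one_of_one_le_of_nonpos (by nlinarith [Real.pi_gt_three]) (by linarith)
    have hΓpos : 0 < Real.Gamma (s / 2) := Real.Gamma_pos_of_pos hs2
    calc (4 * π) ^ (-(s / 2)) / Real.Gamma (s / 2) ≤ 1 / Real.Gamma (s / 2) := by gcongr
      _ = s / 2 / Real.Gamma (s / 2 + 1) := by rw [h1]; field_simp
      _ ≤ s / 2 / m := by gcongr
  -- Gamma((n-s)/2) bound
  have hΓa : Real.Gamma (-a) ≤ 2 * M / ((n : ℝ) - s) := by
    have h1 : Real.Gamma (-a + 1) = -a * Real.Gamma (-a) := Real.Gamma_add_one hapos.ne'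
    have h2 : Real.Gamma (-a + 1) ≤ M :=
      hmax _ ⟨by linarith, by rw [hadef]; linarith⟩
    calc Real.Gamma (-a) = Real.Gamma (-a + 1) / (-a) := by
          rw [h1, mul_div_cancel_left₀ _ hapos.ne']
      _ ≤ M / (-a) := by gcongr
      _ = 2 * M / ((n : ℝ) - s) := by
          rw [show -a = ((n : ℝ) - s) / 2 by rw [hadef]; ring]
          rw [div_div_eq_mul_div]; ring
  have hba : b ^ a = π ^ a * ‖x‖ ^ (-(n : ℝ) + s) := by
    rw [hbdef, Real.mul_rpow Real.pi_pos.le (by positivity)]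
    congr 1
    rw [← Real.rpow_natCast ‖x‖ 2, ← Real.rpow_mul (norm_nonneg x)]
    congr 1
    rw [hadef]; push_cast; ring
  have hπa : π ^ a ≤ 1 :=
    Real.rpow_le_one_of_one_le_of_nonpos (by nlinarith [Real.pi_gt_three]) ha.le
  have ht : (0 : ℝ) ≤ ‖x‖ ^ (-(n : ℝ) + s) := Real.rpow_nonneg hx0.le _
  have h2M : (0 : ℝ) ≤ 2 * M / ((n : ℝ) - s) := div_nonneg (by positivity) hns.le
  calc besselKernel n s x
      ≤ (4 * π) ^ (-(s / 2)) / Real.Gamma (s / 2) * (b ^ a * Real.Gamma (-a)) := by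
        unfold besselKernel
        rw [← hbdef, ← hadef]
        refine mul_le_mul_of_nonneg_left hmono ?_
        have hΓpos : 0 < Real.Gamma (s / 2) := Real.Gamma_pos_of_pos (by linarith)
        positivity
    _ ≤ s / 2 / m * (b ^ a * Real.Gamma (-a)) :=
        mul_le_mul_of_nonneg_right hcoeff (by positivity)
    _ ≤ s / 2 / m * (π ^ a * ‖x‖ ^ (-(n : ℝ) + s) * (2 * M / ((n : ℝ) - s))) := by
        refine mul_le_mul_of_nonneg_left ?_ (by positivity)
        rw [hba]
        exact mul_le_mul_of_nonneg_left hΓa (by positivity)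
    _ ≤ s / 2 / m * (1 * ‖x‖ ^ (-(n : ℝ) + s) * (2 * M / ((n : ℝ) - s))) := by
        refine mul_le_mul_of_nonneg_left
          (mul_le_mul_of_nonneg_right (mul_le_mul_of_nonneg_right hπa ht) h2M) (by positivity)
    _ = M / m * (s / ((n : ℝ) - s)) * ‖x‖ ^ (-(n : ℝ) + s) := by
        rw [one_mul]; field_simp
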